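/- arXiv:1001.4283 — 5 statements merged into one kernel-verified Lean document; each statement's English description precedes it below -/
import Mathlib

section
/- For any bipartition (ρ;σ) of n, one has (ρ;σ) ≤ Φ̂^B(Φ^B(ρ;σ)) in the interleaved dominance order, with equality if and only if (ρ;σ) ∈ Q_n^B. -/
open Finset

/-- Partial sum of the first `k` terms of a sequence of naturals. -/
def psum (π : ℕ → ℕ) (k : ℕ) : ℕ := ∑ i ∈ Finset.range k, π i

/-- A composition of `n`: almost all terms zero, summing to `n`. -/
def IsComposition (n : ℕ) (π : ℕ → ℕ) : Prop :=
  ∃ N, (∀ i, N ≤ i → π i = 0) ∧ psum π N = n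

/-- Dominance order: `l` dominates `π`. -/
def Dominates (l π : ℕ → ℕ) : Prop := ∀ k, psum π k ≤ psum l k

/-- A partition: weakly decreasing sequence. -/
def IsPartition (π : ℕ → ℕ) : Prop := ∀ i, π (i + 1) ≤ π i

/-- A quasi-partition: `π i ≥ π (i+2)` for all `i`. -/
def IsQuasiPartition (π : ℕ → ℕ) : Prop := ∀ i, π (i + 2) ≤ π i

/-- Interleaving of two sequences: `(ρ₁, σ₁, ρ₂, σ₂, …)` (0-indexed). -/
def interleave (ρ σ : ℕ → ℕ) (i : ℕ) : ℕ :=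
  if i % 2 = 0 then ρ (i / 2) else σ (i / 2)

/-- A bipartition of `n`: a pair of partitions whose interleaving sums to `n`. -/
def IsBipartition (n : ℕ) (ρ σ : ℕ → ℕ) : Prop :=
  IsPartition ρ ∧ IsPartition σ ∧ IsComposition n (interleave ρ σ)

/-- Interleaved dominance order on bipartitions: `(ρ;σ) ≤ (μ;ν)`. -/
def BiLE (ρ σ μ ν : ℕ → ℕ) : Prop :=
  Dominates (interleave μ ν) (interleave ρ σ)

/-- The map `Φ^C` on sequences: replace a consecutive pair `2s < 2t`
by `s+t, s+t` (pointwise description; replacements never overlap for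
quasi-partitions). -/
def phiC (π : ℕ → ℕ) : ℕ → ℕ
  | 0 => if π 0 < π 1 then (π 0 + π 1) / 2 else π 0
  | (j + 1) =>
      if π (j + 1) < π (j + 2) then (π (j + 1) + π (j + 2)) / 2
      else if π j < π (j + 1) then (π j + π (j + 1)) / 2
      else π (j + 1)

/-- `Φ^C` of a bipartition: apply `phiC` to the doubled interleaving. -/
def PhiC (ρ σ : ℕ → ℕ) : ℕ → ℕ := phiC (fun i => 2 * interleave ρ σ i)

/-- Membership in `P^C_{2n}`: partition of `2n` with every odd part of even
multiplicity. -/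
def IsPC (n : ℕ) (l : ℕ → ℕ) : Prop :=
  IsPartition l ∧ IsComposition (2 * n) l ∧
    ∀ a : ℕ, Odd a → Even ({i | l i = a}.ncard)

/-- C-distinguished: `μ i ≥ ν i - 1` and `ν i ≥ μ (i+1) - 1`. -/
def QC (μ ν : ℕ → ℕ) : Prop :=
  ∀ i, ν i ≤ μ i + 1 ∧ μ (i + 1) ≤ ν i + 1

/-- B-distinguished: `μ i ≥ ν i - 2` and `ν i ≥ μ (i+1)`. -/
def QB (μ ν : ℕ → ℕ) : Prop :=
  ∀ i, ν i ≤ μ i + 2 ∧ μ (i + 1) ≤ ν i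

/-- Special: `μ i ≥ ν i - 1` and `ν i ≥ μ (i+1)`. -/
def QS (μ ν : ℕ → ℕ) : Prop :=
  ∀ i, ν i ≤ μ i + 1 ∧ μ (i + 1) ≤ ν i

/-- The condition defining `Q_n^{B,2}`: `μ i ≥ ν i - 2`. -/
def QB2 (μ ν : ℕ → ℕ) : Prop := ∀ i, ν i ≤ μ i + 2

/-- For an antitone sequence, the starting index of the run of equal values
containing index `i`. -/
noncomputable def runStart (l : ℕ → ℕ) (i : ℕ) : ℕ := {j | l i < l j}.ncard

/-- The map `Φ̂^C`, pointwise: halve even parts; replace an (even-length)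
maximal run of an odd part `2k+1` with `k, k+1, k, k+1, …`. -/
noncomputable def hphiC (l : ℕ → ℕ) (i : ℕ) : ℕ :=
  if Even (l i) then l i / 2
  else if Even (i - runStart l i) then l i / 2 else l i / 2 + 1

/-- Partial sums of an integer sequence. -/
def zsum (π : ℕ → ℤ) (k : ℕ) : ℤ := ∑ i ∈ Finset.range k, π i

/-- Dominance order on integer sequences. -/
def ZDominates (l π : ℕ → ℤ) : Prop := ∀ k, zsum π k ≤ zsum l k

/-- The interleaved integer sequence `(2ρ₁+1, 2σ₁−1, 2ρ₂+1, 2σ₂−1, …)`. -/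
def interB (ρ σ : ℕ → ℕ) (i : ℕ) : ℤ :=
  if i % 2 = 0 then 2 * (ρ (i / 2) : ℤ) + 1 else 2 * (σ (i / 2) : ℤ) - 1

/-- The map `Φ^B` on integer sequences: replace a consecutive pair `s < t`
by `(s+t)/2, (s+t)/2` (pointwise description). -/
def phiB (π : ℕ → ℤ) : ℕ → ℤ
  | 0 => if π 0 < π 1 then (π 0 + π 1) / 2 else π 0
  | (j + 1) =>
      if π (j + 1) < π (j + 2) then (π (j + 1) + π (j + 2)) / 2
      else if π j < π (j + 1) then (π j + π (j + 1)) / 2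
      else π (j + 1)

/-- `Φ^B` of a bipartition. -/
def PhiB (ρ σ : ℕ → ℕ) : ℕ → ℤ := phiB (interB ρ σ)

/-- Membership in `P^B_{2n+1}` for an integer sequence: nonnegative, weakly
decreasing, summing to `2n+1`, with every (positive) even part of even
multiplicity. -/
def IsPB (n : ℕ) (l : ℕ → ℤ) : Prop :=
  (∀ i, 0 ≤ l i) ∧ (∀ i, l (i + 1) ≤ l i) ∧
  (∃ N, (∀ i, N ≤ i → l i = 0) ∧ zsum l N = 2 * n + 1) ∧
  ∀ a : ℤ, 0 < a → Even a → Even ({i | l i = a}.ncard)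

/-- Membership in `P^B_{2n+1}` for a natural-number partition. -/
def IsPBN (n : ℕ) (l : ℕ → ℕ) : Prop :=
  IsPartition l ∧ IsComposition (2 * n + 1) l ∧
    ∀ a : ℕ, 0 < a → Even a → Even ({i | l i = a}.ncard)

/-- The map `Φ̂^B`, pointwise (0-indexed, so the paper's index `i` is `j+1`):
an odd part `λ_i` becomes `(λ_i + (−1)^i)/2`; a maximal run of an even part
`2k` starting at (0-indexed) position `s` becomes `k, k, …` if `s` is odd
(paper's `i` even) and `k−1, k+1, k−1, k+1, …` if `s` is even (paper's `i`
odd). -/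
noncomputable def hphiB (l : ℕ → ℕ) (j : ℕ) : ℕ :=
  if Odd (l j) then (if Even j then (l j - 1) / 2 else (l j + 1) / 2)
  else
    if Odd (runStart l j) then l j / 2
    else if Even (j - runStart l j) then l j / 2 - 1 else l j / 2 + 1

/-- First component of the special closure `(ρ;σ)°`. -/
def scRho (ρ σ : ℕ → ℕ) : ℕ → ℕ
  | 0 => if ρ 0 + 1 < σ 0 then (ρ 0 + σ 0) / 2 else ρ 0
  | (i + 1) =>
      if ρ (i + 1) + 1 < σ (i + 1) then (ρ (i + 1) + σ (i + 1)) / 2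
      else if σ i < ρ (i + 1) then (σ i + ρ (i + 1)) / 2
      else ρ (i + 1)

/-- Second component of the special closure `(ρ;σ)°`. -/
def scSigma (ρ σ : ℕ → ℕ) (i : ℕ) : ℕ :=
  if ρ i + 1 < σ i then (ρ i + σ i + 1) / 2
  else if σ i < ρ (i + 1) then (σ i + ρ (i + 1) + 1) / 2
  else σ i

/-- First component of the closure `(ρ;σ)~` into `Q_n^{B,2}`. -/
def tRho (ρ σ : ℕ → ℕ) (i : ℕ) : ℕ :=
  if ρ i + 2 < σ i then (ρ i + σ i + 1) / 2 - 1 else ρ i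

/-- Second component of the closure `(ρ;σ)~` into `Q_n^{B,2}`. -/
def tSigma (ρ σ : ℕ → ℕ) (i : ℕ) : ℕ :=
  if ρ i + 2 < σ i then (ρ i + σ i) / 2 + 1 else σ i

/-- First component of the closure `(ρ;σ)^B` into `Q_n^B`. -/
def bRho (ρ σ : ℕ → ℕ) : ℕ → ℕ
  | 0 => if ρ 0 + 2 < σ 0 then (ρ 0 + σ 0 + 1) / 2 - 1 else ρ 0
  | (i + 1) =>
      if ρ (i + 1) + 2 < σ (i + 1) then (ρ (i + 1) + σ (i + 1) + 1) / 2 - 1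
      else if σ i < ρ (i + 1) then (σ i + ρ (i + 1)) / 2
      else ρ (i + 1)

/-- Second component of the closure `(ρ;σ)^B` into `Q_n^B`. -/
def bSigma (ρ σ : ℕ → ℕ) (i : ℕ) : ℕ :=
  if ρ i + 2 < σ i then (ρ i + σ i) / 2 + 1
  else if σ i < ρ (i + 1) then (σ i + ρ (i + 1) + 1) / 2
  else σ i

/-- First component of the closure `(ρ;σ)^C` into `Q_n^C`. -/
def cRho (ρ σ : ℕ → ℕ) : ℕ → ℕ
  | 0 => if ρ 0 + 1 < σ 0 then (ρ 0 + σ 0) / 2 else ρ 0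
  | (i + 1) =>
      if ρ (i + 1) + 1 < σ (i + 1) then (ρ (i + 1) + σ (i + 1)) / 2
      else if σ i + 1 < ρ (i + 1) then (σ i + ρ (i + 1) + 1) / 2
      else ρ (i + 1)

/-- Second component of the closure `(ρ;σ)^C` into `Q_n^C`. -/
def cSigma (ρ σ : ℕ → ℕ) (i : ℕ) : ℕ :=
  if ρ i + 1 < σ i then (ρ i + σ i + 1) / 2
  else if σ i + 1 < ρ (i + 1) then (σ i + ρ (i + 1)) / 2
  else σ i
section AuxB

variable (ρ σ : ℕ → ℕ)

/-- Average of two consecutive entries of `interB`. -/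
def avgB (j : ℕ) : ℤ := (interB ρ σ j + interB ρ σ (j + 1)) / 2

lemma interB_e (k : ℕ) : interB ρ σ (2 * k) = 2 * (ρ k : ℤ) + 1 := by
  have h1 : (2 * k) % 2 = 0 := by omega
  have h2 : (2 * k) / 2 = k := by omega
  simp [interB, h1, h2]

lemma interB_o (k : ℕ) : interB ρ σ (2 * k + 1) = 2 * (σ k : ℤ) - 1 := by
  have h1 : (2 * k + 1) % 2 = 1 := by omega
  have h2 : (2 * k + 1) / 2 = k := by omega
  simp [interB, h1, h2]

lemma interB_odd' (j : ℕ) : ∃ m : ℤ, interB ρ σ j = 2 * m + 1 := by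
  rcases Nat.even_or_odd j with ⟨k, hk⟩ | ⟨k, hk⟩
  · exact ⟨ρ k, by rw [show j = 2 * k by omega, interB_e]⟩
  · exact ⟨(σ k : ℤ) - 1, by rw [hk, interB_o]; ring⟩

lemma interB_ge (j : ℕ) : -1 ≤ interB ρ σ j := by
  rcases Nat.even_or_odd j with ⟨k, hk⟩ | ⟨k, hk⟩
  · rw [show j = 2 * k by omega, interB_e]
    have : (0 : ℤ) ≤ ρ k := Int.ofNat_nonneg _; omega
  · rw [hk, interB_o]; have : (0 : ℤ) ≤ σ k := Int.ofNat_nonneg _; omega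

lemma avgB_mul (j : ℕ) : 2 * avgB ρ σ j = interB ρ σ j + interB ρ σ (j + 1) := by
  obtain ⟨m, hm⟩ := interB_odd' ρ σ j
  obtain ⟨m', hm'⟩ := interB_odd' ρ σ (j + 1)
  unfold avgB; omega

lemma avgB_e (k : ℕ) : avgB ρ σ (2 * k) = (ρ k : ℤ) + σ k := by
  have h := avgB_mul ρ σ (2 * k)
  rw [interB_e, show 2 * k + 1 = 2 * k + 1 from rfl, interB_o] at h
  omega

lemma avgB_o (k : ℕ) : avgB ρ σ (2 * k + 1) = (σ k : ℤ) + ρ (k + 1) := by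
  have h := avgB_mul ρ σ (2 * k + 1)
  rw [interB_o, show 2 * k + 1 + 1 = 2 * (k + 1) by ring, interB_e] at h
  omega

lemma interB_quasi (hρ : IsPartition ρ) (hσ : IsPartition σ) (j : ℕ) :
    interB ρ σ (j + 2) ≤ interB ρ σ j := by
  rcases Nat.even_or_odd j with ⟨k, hk⟩ | ⟨k, hk⟩
  · rw [show j = 2 * k by omega, show 2 * k + 2 = 2 * (k + 1) by ring,
      interB_e, interB_e]
    have := hρ k; omega
  · rw [hk, show 2 * k + 1 + 2 = 2 * (k + 1) + 1 by ring, interB_o, interB_o]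
    have := hσ k; omega

lemma asc_isolated (hρ : IsPartition ρ) (hσ : IsPartition σ) (j : ℕ)
    (h : interB ρ σ j < interB ρ σ (j + 1)) :
    ¬ interB ρ σ (j + 1) < interB ρ σ (j + 2) := by
  rcases Nat.even_or_odd j with ⟨k, hk⟩ | ⟨k, hk⟩
  · rw [show j = 2 * k by omega] at h ⊢
    rw [interB_e, interB_o] at h
    rw [show 2 * k + 1 + 1 = 2 * (k + 1) by ring, interB_o, interB_e]
    have h1 := hρ k; have h2 := hσ k
    intro hc; omega
  · rw [hk] at h ⊢
    rw [interB_o, show 2 * k + 1 + 1 = 2 * (k + 1) by ring, interB_e] at h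
    rw [show 2 * k + 1 + 1 = 2 * (k + 1) by ring,
      show 2 * k + 1 + 2 = 2 * (k + 1) + 1 by ring, interB_e, interB_o]
    have h1 := hρ k; have h2 := hσ (k)
    intro hc; omega

lemma phiB_zero :
    PhiB ρ σ 0 = if interB ρ σ 0 < interB ρ σ 1 then avgB ρ σ 0 else interB ρ σ 0 := rfl

lemma phiB_succ (j : ℕ) :
    PhiB ρ σ (j + 1) =
      if interB ρ σ (j + 1) < interB ρ σ (j + 2) then avgB ρ σ (j + 1)
      else if interB ρ σ j < interB ρ σ (j + 1) then avgB ρ σ j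
      else interB ρ σ (j + 1) := rfl

lemma phiB_of_asc (j : ℕ) (h : interB ρ σ j < interB ρ σ (j + 1)) :
    PhiB ρ σ j = avgB ρ σ j := by
  cases j with
  | zero => rw [phiB_zero, if_pos h]
  | succ j' => rw [phiB_succ, if_pos h]

lemma phiB_of_asc2 (hρ : IsPartition ρ) (hσ : IsPartition σ) (j : ℕ)
    (h : interB ρ σ j < interB ρ σ (j + 1)) :
    PhiB ρ σ (j + 1) = avgB ρ σ j := by
  rw [phiB_succ, if_neg (asc_isolated ρ σ hρ hσ j h), if_pos h]

lemma phiB_of_flat0 (h : ¬ interB ρ σ 0 < interB ρ σ 1) : PhiB ρ σ 0 = interB ρ σ 0 := by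
  rw [phiB_zero, if_neg h]

lemma phiB_of_flat (j : ℕ) (h1 : ¬ interB ρ σ (j + 1) < interB ρ σ (j + 2))
    (h2 : ¬ interB ρ σ j < interB ρ σ (j + 1)) :
    PhiB ρ σ (j + 1) = interB ρ σ (j + 1) := by
  rw [phiB_succ, if_neg h1, if_neg h2]

lemma neg_one_asc (j : ℕ) (h : interB ρ σ j = -1) :
    interB ρ σ j < interB ρ σ (j + 1) := by
  rcases Nat.even_or_odd j with ⟨k, hk⟩ | ⟨k, hk⟩
  · rw [show j = 2 * k by omega, interB_e] at h; omega
  · rw [hk] at h ⊢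
    rw [show 2 * k + 1 + 1 = 2 * (k + 1) by ring, interB_e]
    have : (0 : ℤ) ≤ ρ (k + 1) := Int.ofNat_nonneg _
    omega

lemma phiB_nonneg (j : ℕ) : 0 ≤ PhiB ρ σ j := by
  have hge := interB_ge ρ σ
  have hav : ∀ i, interB ρ σ i < interB ρ σ (i + 1) → 0 ≤ avgB ρ σ i := by
    intro i hi
    have h2 := avgB_mul ρ σ i
    obtain ⟨m, hm⟩ := interB_odd' ρ σ i
    obtain ⟨m', hm'⟩ := interB_odd' ρ σ (i + 1)
    have := hge i; omega
  cases j with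
  | zero =>
    rw [phiB_zero]; split_ifs with h
    · exact hav 0 h
    · have := hge 0
      rcases eq_or_lt_of_le this with heq | hlt
      · exact absurd (neg_one_asc ρ σ 0 heq.symm) h
      · omega
  | succ j' =>
    rw [phiB_succ]; split_ifs with h1 h2
    · exact hav _ h1
    · exact hav _ h2
    · have := hge (j' + 1)
      rcases eq_or_lt_of_le this with heq | hlt
      · exact absurd (neg_one_asc ρ σ _ heq.symm) h1
      · omega

end AuxB
section AuxB2

variable (ρ σ : ℕ → ℕ)

lemma phiB_succ_le (hρ : IsPartition ρ) (hσ : IsPartition σ) (j : ℕ) :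
    PhiB ρ σ (j + 1) ≤ PhiB ρ σ j := by
  have hq := interB_quasi ρ σ hρ hσ
  have hm := avgB_mul ρ σ
  by_cases h1 : interB ρ σ (j + 1) < interB ρ σ (j + 2)
  · have hnj : ¬ interB ρ σ j < interB ρ σ (j + 1) := by
      intro hj; exact asc_isolated ρ σ hρ hσ j hj h1
    rw [phiB_of_asc ρ σ (j + 1) h1]
    cases j with
    | zero =>
      rw [phiB_of_flat0 ρ σ hnj]
      have := hm (0 + 1); have q : interB ρ σ (0 + 1 + 1) ≤ interB ρ σ 0 := hq 0
      omega
    | succ j' =>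
      by_cases h0 : interB ρ σ j' < interB ρ σ (j' + 1)
      · rw [phiB_of_asc2 ρ σ hρ hσ j' h0]
        have := hm (j' + 1 + 1); have := hm j'
        have q1 : interB ρ σ (j' + 1 + 1) ≤ interB ρ σ j' := hq j'
        have q2 : interB ρ σ (j' + 1 + 1 + 1) ≤ interB ρ σ (j' + 1) := hq (j' + 1)
        omega
      · rw [phiB_of_flat ρ σ j' hnj h0]
        have := hm (j' + 1 + 1)
        have q2 : interB ρ σ (j' + 1 + 1 + 1) ≤ interB ρ σ (j' + 1) := hq (j' + 1)
        omega
  · by_cases h2 : interB ρ σ j < interB ρ σ (j + 1)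
    · rw [phiB_of_asc2 ρ σ hρ hσ j h2, phiB_of_asc ρ σ j h2]
    · rw [phiB_of_flat ρ σ j h1 h2]
      cases j with
      | zero => rw [phiB_of_flat0 ρ σ h2]; omega
      | succ j' =>
        by_cases h0 : interB ρ σ j' < interB ρ σ (j' + 1)
        · rw [phiB_of_asc2 ρ σ hρ hσ j' h0]
          have := hm j'
          have q : interB ρ σ (j' + 1 + 1) ≤ interB ρ σ j' := hq j'
          omega
        · rw [phiB_of_flat ρ σ j' h2 h0]; omega

lemma phiB_anti (hρ : IsPartition ρ) (hσ : IsPartition σ) {i j : ℕ} (hij : i ≤ j) :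
    PhiB ρ σ j ≤ PhiB ρ σ i := by
  induction j with
  | zero => simp_all
  | succ j' ih =>
    rcases Nat.lt_or_ge i (j' + 1) with h | h
    · exact le_trans (phiB_succ_le ρ σ hρ hσ j') (ih (by omega))
    · have : i = j' + 1 := by omega
      subst this; rfl

lemma lB_anti (hρ : IsPartition ρ) (hσ : IsPartition σ) {i j : ℕ} (hij : i ≤ j) :
    (PhiB ρ σ j).toNat ≤ (PhiB ρ σ i).toNat := by
  have := phiB_anti ρ σ hρ hσ hij; omega

lemma lB_support (hρ : IsPartition ρ) (hσ : IsPartition σ)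
    (N : ℕ) (hN : ∀ k, N ≤ k → ρ k = 0 ∧ σ k = 0)
    (j : ℕ) (hj : 2 * N + 1 ≤ j) : (PhiB ρ σ j).toNat = 0 := by
  have key : ∀ k, N ≤ k → interB ρ σ (2 * k + 1) < interB ρ σ (2 * k + 1 + 1) := by
    intro k hk
    rw [interB_o, show 2 * k + 1 + 1 = 2 * (k + 1) by ring, interB_e,
      (hN k hk).2, (hN (k + 1) (by omega)).1]
    norm_num
  have hval : ∀ k, N ≤ k → avgB ρ σ (2 * k + 1) = 0 := by
    intro k hk
    have := avgB_mul ρ σ (2 * k + 1)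
    rw [interB_o, show 2 * k + 1 + 1 = 2 * (k + 1) by ring, interB_e,
      (hN k hk).2, (hN (k + 1) (by omega)).1] at this
    omega
  rcases Nat.even_or_odd j with ⟨k, hk⟩ | ⟨k, hk⟩
  · have hk' : j = 2 * (k - 1) + 1 + 1 := by omega
    have hN1 : N ≤ k - 1 := by omega
    rw [hk', phiB_of_asc2 ρ σ hρ hσ _ (key _ hN1), hval _ hN1]; rfl
  · have hNk : N ≤ k := by omega
    rw [hk, phiB_of_asc ρ σ _ (key _ hNk), hval _ hNk]; rfl

end AuxB2
/-- The doubled sequence `l = Φ^B(ρ;σ)` as a natural-number sequence. -/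
def lB (ρ σ : ℕ → ℕ) (j : ℕ) : ℕ := (PhiB ρ σ j).toNat

section AuxB3

variable (ρ σ : ℕ → ℕ)

lemma runStart_congr (l : ℕ → ℕ) {i j : ℕ} (h : l i = l j) :
    runStart l i = runStart l j := by
  unfold runStart; rw [h]

lemma runStart_eq_self (l : ℕ → ℕ) (hanti : ∀ {i j : ℕ}, i ≤ j → l j ≤ l i)
    (j : ℕ) (hj : ∀ i, i < j → l j < l i) : runStart l j = j := by
  unfold runStart
  have hset : {i | l j < l i} = ↑(Finset.range j) := by
    ext i
    simp only [Set.mem_setOf_eq, Finset.coe_range, Set.mem_Iio]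
    constructor
    · intro h
      by_contra hc
      have := hanti (show j ≤ i by omega); omega
    · exact hj i
  rw [hset, Set.ncard_coe_finset, Finset.card_range]

lemma lB_coe (j : ℕ) : (lB ρ σ j : ℤ) = PhiB ρ σ j := by
  have := phiB_nonneg ρ σ j
  unfold lB; omega

lemma even_in_pair (j : ℕ) (h2 : PhiB ρ σ j % 2 = 0)
    (hna : ¬ interB ρ σ j < interB ρ σ (j + 1)) :
    ∃ j', j = j' + 1 ∧ interB ρ σ j' < interB ρ σ (j' + 1) ∧
      PhiB ρ σ j = avgB ρ σ j' := by
  cases j with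
  | zero =>
    rw [phiB_of_flat0 ρ σ hna] at h2
    obtain ⟨m, hm⟩ := interB_odd' ρ σ 0
    omega
  | succ j' =>
    by_cases h0 : interB ρ σ j' < interB ρ σ (j' + 1)
    · exact ⟨j', rfl, h0, by rw [phiB_succ, if_neg hna, if_pos h0]⟩
    · rw [phiB_of_flat ρ σ j' hna h0] at h2
      obtain ⟨m, hm⟩ := interB_odd' ρ σ (j' + 1)
      omega

lemma runStart_run (hρ : IsPartition ρ) (hσ : IsPartition σ) :
    ∀ j, interB ρ σ j < interB ρ σ (j + 1) → PhiB ρ σ j % 2 = 0 →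
      runStart (lB ρ σ) j % 2 = j % 2 ∧ runStart (lB ρ σ) j ≤ j := by
  intro j
  induction j using Nat.strong_induction_on with
  | _ j ih =>
    intro hasc h2
    have hanti : ∀ {a b : ℕ}, a ≤ b → lB ρ σ b ≤ lB ρ σ a :=
      fun h => lB_anti ρ σ hρ hσ h
    by_cases hstart : ∀ i, i < j → lB ρ σ j < lB ρ σ i
    · rw [runStart_eq_self (lB ρ σ) (fun h => hanti h) j hstart]
      omega
    · push_neg at hstart
      obtain ⟨i, hij, hle⟩ := hstart
      cases j with
      | zero => omega
      | succ j' =>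
        have hEq : lB ρ σ j' = lB ρ σ (j' + 1) := by
          have h1 : lB ρ σ j' ≤ lB ρ σ i := hanti (by omega)
          have h2 : lB ρ σ (j' + 1) ≤ lB ρ σ j' := hanti (by omega)
          omega
        have hPhiEq : PhiB ρ σ j' = PhiB ρ σ (j' + 1) := by
          have n1 := phiB_nonneg ρ σ j'
          have n2 := phiB_nonneg ρ σ (j' + 1)
          unfold lB at hEq; omega
        have h2' : PhiB ρ σ j' % 2 = 0 := by rw [hPhiEq]; exact h2
        have hnasc' : ¬ interB ρ σ j' < interB ρ σ (j' + 1) := by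
          intro hc; exact asc_isolated ρ σ hρ hσ j' hc hasc
        obtain ⟨j'', hj'', hasc'', hval⟩ := even_in_pair ρ σ j' h2' hnasc'
        have hPhi'' : PhiB ρ σ j'' = PhiB ρ σ j' := by
          rw [phiB_of_asc ρ σ j'' hasc'', hval]
        have h2'' : PhiB ρ σ j'' % 2 = 0 := by rw [hPhi'']; exact h2'
        obtain ⟨hpar, hle''⟩ := ih j'' (by omega) hasc'' h2''
        have hcongr : runStart (lB ρ σ) (j' + 1) = runStart (lB ρ σ) j'' := by
          apply runStart_congr
          unfold lB; rw [← hPhiEq, ← hPhi'']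
        rw [hcongr]
        omega

lemma lB_pair2 (hρ : IsPartition ρ) (hσ : IsPartition σ) (j : ℕ)
    (hasc : interB ρ σ j < interB ρ σ (j + 1)) : lB ρ σ (j + 1) = lB ρ σ j := by
  unfold lB
  rw [phiB_of_asc2 ρ σ hρ hσ j hasc, phiB_of_asc ρ σ j hasc]

end AuxB3
section AuxB4

variable (ρ σ : ℕ → ℕ)

lemma hphiB_eval_odd (l : ℕ → ℕ) (j : ℕ) (h : Odd (l j)) :
    hphiB l j = if Even j then (l j - 1) / 2 else (l j + 1) / 2 := by
  unfold hphiB; rw [if_pos h]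

lemma hphiB_eval_even_oddrun (l : ℕ → ℕ) (j : ℕ) (h : ¬ Odd (l j))
    (h2 : Odd (runStart l j)) : hphiB l j = l j / 2 := by
  unfold hphiB; rw [if_neg h, if_pos h2]

lemma hphiB_eval_even_evenrun (l : ℕ → ℕ) (j : ℕ) (h : ¬ Odd (l j))
    (h2 : ¬ Odd (runStart l j)) (h3 : Even (j - runStart l j)) :
    hphiB l j = l j / 2 - 1 := by
  unfold hphiB; rw [if_neg h, if_neg h2, if_pos h3]

lemma hphiB_eval_even_evenrun' (l : ℕ → ℕ) (j : ℕ) (h : ¬ Odd (l j))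
    (h2 : ¬ Odd (runStart l j)) (h3 : ¬ Even (j - runStart l j)) :
    hphiB l j = l j / 2 + 1 := by
  unfold hphiB; rw [if_neg h, if_neg h2, if_neg h3]

lemma interleave_e (x y : ℕ → ℕ) (k : ℕ) : interleave x y (2 * k) = x k := by
  have h1 : (2 * k) % 2 = 0 := by omega
  have h2 : (2 * k) / 2 = k := by omega
  simp [interleave, h1, h2]

lemma interleave_o (x y : ℕ → ℕ) (k : ℕ) : interleave x y (2 * k + 1) = y k := by
  have h1 : (2 * k + 1) % 2 = 1 := by omega
  have h2 : (2 * k + 1) / 2 = k := by omega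
  simp [interleave, h1, h2]

lemma hphiB_eq_e (hρ : IsPartition ρ) (hσ : IsPartition σ) (k : ℕ) :
    hphiB (lB ρ σ) (2 * k) = bRho ρ σ k := by
  have hE := interB_e ρ σ k
  have hO := interB_o ρ σ k
  have hAv := avgB_e ρ σ k
  have hco := lB_coe ρ σ (2 * k)
  by_cases hA : interB ρ σ (2 * k) < interB ρ σ (2 * k + 1)
  · -- internal pair start
    have hv : PhiB ρ σ (2 * k) = avgB ρ σ (2 * k) := phiB_of_asc ρ σ (2 * k) hA
    have hl : lB ρ σ (2 * k) = ρ k + σ k := by rw [hv, hAv] at hco; omega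
    have hA' := hA; rw [hE, hO] at hA'
    by_cases hpar : (ρ k + σ k) % 2 = 1
    · rw [hphiB_eval_odd (lB ρ σ) (2 * k) (by rw [hl]; exact Nat.odd_iff.mpr hpar),
        if_pos ⟨k, by ring⟩, hl]
      cases k with
      | zero => simp only [bRho]; split_ifs <;> omega
      | succ k' => have := hσ k'; simp only [bRho]; split_ifs <;> omega
    · have h2 : PhiB ρ σ (2 * k) % 2 = 0 := by rw [hv, hAv]; omega
      obtain ⟨hp, hle⟩ := runStart_run ρ σ hρ hσ (2 * k) hA h2
      have hnodd : ¬ Odd (lB ρ σ (2 * k)) := by rw [hl, Nat.odd_iff]; omega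
      have hrodd : ¬ Odd (runStart (lB ρ σ) (2 * k)) := by rw [Nat.odd_iff]; omega
      have hdiff : Even (2 * k - runStart (lB ρ σ) (2 * k)) := by
        rw [Nat.even_iff]; omega
      rw [hphiB_eval_even_evenrun _ _ hnodd hrodd hdiff, hl]
      cases k with
      | zero => simp only [bRho]; split_ifs <;> omega
      | succ k' => have := hσ k'; simp only [bRho]; split_ifs <;> omega
  · cases k with
    | zero =>
      have hv : PhiB ρ σ (2 * 0) = interB ρ σ (2 * 0) := phiB_of_flat0 ρ σ hA
      have hl : lB ρ σ (2 * 0) = 2 * ρ 0 + 1 := by rw [hv, hE] at hco; omega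
      rw [hphiB_eval_odd _ _ (by rw [hl]; exact Nat.odd_iff.mpr (by omega)),
        if_pos ⟨0, by ring⟩, hl]
      have hA' := hA; rw [hE, hO] at hA'
      simp only [bRho]; split_ifs <;> omega
    | succ k' =>
      have hOm := interB_o ρ σ k'
      have hAn := hA; rw [hE, hO] at hAn
      have hE2 : interB ρ σ (2 * k' + 1 + 1) = 2 * (ρ (k' + 1) : ℤ) + 1 :=
        interB_e ρ σ (k' + 1)
      by_cases hL : interB ρ σ (2 * k' + 1) < interB ρ σ (2 * k' + 1 + 1)
      · -- cross pair, second element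
        have hv : PhiB ρ σ (2 * (k' + 1)) = avgB ρ σ (2 * k' + 1) :=
          phiB_of_asc2 ρ σ hρ hσ (2 * k' + 1) hL
        have hAvm := avgB_o ρ σ k'
        have hl : lB ρ σ (2 * (k' + 1)) = σ k' + ρ (k' + 1) := by
          rw [hv, hAvm] at hco; omega
        have hLn := hL; rw [hOm, hE2] at hLn
        by_cases hpar : (σ k' + ρ (k' + 1)) % 2 = 1
        · rw [hphiB_eval_odd _ _ (by rw [hl]; exact Nat.odd_iff.mpr hpar),
            if_pos ⟨k' + 1, by ring⟩, hl]
          simp only [bRho]; have := hσ k'; split_ifs <;> omega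
        · have h2' : PhiB ρ σ (2 * k' + 1) % 2 = 0 := by
            rw [phiB_of_asc ρ σ (2 * k' + 1) hL, hAvm]; omega
          obtain ⟨hp, hle⟩ := runStart_run ρ σ hρ hσ (2 * k' + 1) hL h2'
          have hcongr : runStart (lB ρ σ) (2 * (k' + 1)) =
              runStart (lB ρ σ) (2 * k' + 1) := by
            apply runStart_congr
            exact lB_pair2 ρ σ hρ hσ (2 * k' + 1) hL
          have hnodd : ¬ Odd (lB ρ σ (2 * (k' + 1))) := by
            rw [hl, Nat.odd_iff]; omega
          have hrodd : Odd (runStart (lB ρ σ) (2 * (k' + 1))) := by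
            rw [hcongr, Nat.odd_iff]; omega
          rw [hphiB_eval_even_oddrun _ _ hnodd hrodd, hl]
          simp only [bRho]; have := hσ k'; split_ifs <;> omega
      · -- flat
        have hv : PhiB ρ σ (2 * (k' + 1)) = interB ρ σ (2 * (k' + 1)) :=
          phiB_of_flat ρ σ (2 * k' + 1) hA hL
        have hl : lB ρ σ (2 * (k' + 1)) = 2 * ρ (k' + 1) + 1 := by
          rw [hv, hE] at hco; omega
        rw [hphiB_eval_odd _ _ (by rw [hl]; exact Nat.odd_iff.mpr (by omega)),
          if_pos ⟨k' + 1, by ring⟩, hl]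
        have hLn := hL; rw [hOm, hE2] at hLn
        simp only [bRho]; split_ifs <;> omega

lemma hphiB_eq_o (hρ : IsPartition ρ) (hσ : IsPartition σ) (k : ℕ) :
    hphiB (lB ρ σ) (2 * k + 1) = bSigma ρ σ k := by
  have hE := interB_e ρ σ k
  have hO := interB_o ρ σ k
  have hE2 : interB ρ σ (2 * k + 1 + 1) = 2 * (ρ (k + 1) : ℤ) + 1 :=
    interB_e ρ σ (k + 1)
  have hco := lB_coe ρ σ (2 * k + 1)
  have hnotevj : ¬ Even (2 * k + 1) := by rw [Nat.even_iff]; omega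
  by_cases hC : interB ρ σ (2 * k + 1) < interB ρ σ (2 * k + 1 + 1)
  · -- cross pair, first element
    have hv : PhiB ρ σ (2 * k + 1) = avgB ρ σ (2 * k + 1) :=
      phiB_of_asc ρ σ (2 * k + 1) hC
    have hAv := avgB_o ρ σ k
    have hl : lB ρ σ (2 * k + 1) = σ k + ρ (k + 1) := by rw [hv, hAv] at hco; omega
    have hCn := hC; rw [hO, hE2] at hCn
    by_cases hpar : (σ k + ρ (k + 1)) % 2 = 1
    · rw [hphiB_eval_odd _ _ (by rw [hl]; exact Nat.odd_iff.mpr hpar),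
        if_neg hnotevj, hl]
      simp only [bSigma]; have := hρ k; split_ifs <;> omega
    · have h2 : PhiB ρ σ (2 * k + 1) % 2 = 0 := by rw [hv, hAv]; omega
      obtain ⟨hp, hle⟩ := runStart_run ρ σ hρ hσ (2 * k + 1) hC h2
      have hnodd : ¬ Odd (lB ρ σ (2 * k + 1)) := by rw [hl, Nat.odd_iff]; omega
      have hrodd : Odd (runStart (lB ρ σ) (2 * k + 1)) := by rw [Nat.odd_iff]; omega
      rw [hphiB_eval_even_oddrun _ _ hnodd hrodd, hl]
      simp only [bSigma]; have := hρ k; split_ifs <;> omega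
  · by_cases hI : interB ρ σ (2 * k) < interB ρ σ (2 * k + 1)
    · -- internal pair, second element
      have hv : PhiB ρ σ (2 * k + 1) = avgB ρ σ (2 * k) :=
        phiB_of_asc2 ρ σ hρ hσ (2 * k) hI
      have hAv := avgB_e ρ σ k
      have hl : lB ρ σ (2 * k + 1) = ρ k + σ k := by rw [hv, hAv] at hco; omega
      have hIn := hI; rw [hE, hO] at hIn
      have hCn := hC; rw [hO, hE2] at hCn
      by_cases hpar : (ρ k + σ k) % 2 = 1
      · rw [hphiB_eval_odd _ _ (by rw [hl]; exact Nat.odd_iff.mpr hpar),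
          if_neg hnotevj, hl]
        simp only [bSigma]; split_ifs <;> omega
      · have h2' : PhiB ρ σ (2 * k) % 2 = 0 := by
          rw [phiB_of_asc ρ σ (2 * k) hI, hAv]; omega
        obtain ⟨hp, hle⟩ := runStart_run ρ σ hρ hσ (2 * k) hI h2'
        have hcongr : runStart (lB ρ σ) (2 * k + 1) = runStart (lB ρ σ) (2 * k) := by
          apply runStart_congr
          exact lB_pair2 ρ σ hρ hσ (2 * k) hI
        have hnodd : ¬ Odd (lB ρ σ (2 * k + 1)) := by rw [hl, Nat.odd_iff]; omega
        have hrodd : ¬ Odd (runStart (lB ρ σ) (2 * k + 1)) := by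
          rw [hcongr, Nat.odd_iff]; omega
        have hdiff : ¬ Even (2 * k + 1 - runStart (lB ρ σ) (2 * k + 1)) := by
          rw [hcongr, Nat.even_iff]; omega
        rw [hphiB_eval_even_evenrun' _ _ hnodd hrodd hdiff, hl]
        simp only [bSigma]; split_ifs <;> omega
    · -- flat
      have hv : PhiB ρ σ (2 * k + 1) = interB ρ σ (2 * k + 1) :=
        phiB_of_flat ρ σ (2 * k) hC hI
      have hCn := hC; rw [hO, hE2] at hCn
      have hIn := hI; rw [hE, hO] at hIn
      have hl : lB ρ σ (2 * k + 1) = 2 * σ k - 1 := by rw [hv, hO] at hco; omega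
      rw [hphiB_eval_odd _ _ (by rw [hl]; exact Nat.odd_iff.mpr (by omega)),
        if_neg hnotevj, hl]
      simp only [bSigma]; split_ifs <;> omega

lemma hphiB_eq (hρ : IsPartition ρ) (hσ : IsPartition σ) (j : ℕ) :
    hphiB (lB ρ σ) j = interleave (bRho ρ σ) (bSigma ρ σ) j := by
  rcases Nat.even_or_odd j with ⟨k, hk⟩ | ⟨k, hk⟩
  · have hj : j = 2 * k := by omega
    subst hj
    rw [interleave_e, hphiB_eq_e ρ σ hρ hσ k]
  · subst hk
    rw [interleave_o, hphiB_eq_o ρ σ hρ hσ k]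

end AuxB4
section AuxB5

variable (ρ σ : ℕ → ℕ)

lemma psum_succ (f : ℕ → ℕ) (n : ℕ) : psum f (n + 1) = psum f n + f n :=
  Finset.sum_range_succ f n

lemma psum_interleave_e (x y : ℕ → ℕ) (k : ℕ) :
    psum (interleave x y) (2 * k) = psum x k + psum y k := by
  induction k with
  | zero => simp [psum]
  | succ k ih =>
    have e1 : 2 * (k + 1) = (2 * k + 1) + 1 := by ring
    rw [e1, psum_succ, show (2 * k + 1) = 2 * k + 1 from rfl, psum_succ, ih,
      psum_succ, psum_succ, interleave_o, interleave_e]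
    omega

lemma psum_interleave_o (x y : ℕ → ℕ) (k : ℕ) :
    psum (interleave x y) (2 * k + 1) = psum x (k + 1) + psum y k := by
  rw [psum_succ, psum_interleave_e, interleave_e, psum_succ]
  omega

/-- Overshoot at even cuts. -/
def gBx (k : ℕ) : ℕ := if σ k < ρ (k + 1) then (σ k + ρ (k + 1) + 1) / 2 - σ k else 0

/-- Overshoot at odd cuts. -/
def hBxx (k : ℕ) : ℕ := if ρ k + 2 < σ k then (ρ k + σ k + 1) / 2 - 1 - ρ k else 0

lemma bSum (hρ : IsPartition ρ) (hσ : IsPartition σ) (k : ℕ) :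
    psum (bRho ρ σ) (k + 1) + psum (bSigma ρ σ) k
        = psum ρ (k + 1) + psum σ k + hBxx ρ σ k ∧
      psum (bRho ρ σ) (k + 1) + psum (bSigma ρ σ) (k + 1)
        = psum ρ (k + 1) + psum σ (k + 1) + gBx ρ σ k := by
  induction k with
  | zero =>
    constructor
    · rw [psum_succ, psum_succ]
      simp only [psum, Finset.range_zero, Finset.sum_empty, bRho, hBxx]
      split_ifs <;> omega
    · rw [psum_succ, psum_succ, psum_succ, psum_succ]
      simp only [psum, Finset.range_zero, Finset.sum_empty, bRho, bSigma, gBx, hBxx]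
      have := hρ 0
      split_ifs <;> omega
  | succ k ih =>
    obtain ⟨ih1, ih2⟩ := ih
    constructor
    · rw [psum_succ (bRho ρ σ) (k + 1), psum_succ ρ (k + 1)]
      have key : bRho ρ σ (k + 1) + gBx ρ σ k = ρ (k + 1) + hBxx ρ σ (k + 1) := by
        simp only [bRho, gBx, hBxx]
        have := hσ k
        split_ifs <;> omega
      omega
    · rw [psum_succ (bRho ρ σ) (k + 1), psum_succ ρ (k + 1),
        psum_succ (bSigma ρ σ) (k + 1), psum_succ σ (k + 1)]
      have key1 : bRho ρ σ (k + 1) + gBx ρ σ k = ρ (k + 1) + hBxx ρ σ (k + 1) := by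
        simp only [bRho, gBx, hBxx]
        have := hσ k
        split_ifs <;> omega
      have key2 : bSigma ρ σ (k + 1) + hBxx ρ σ (k + 1) = σ (k + 1) + gBx ρ σ (k + 1) := by
        simp only [bSigma, gBx, hBxx]
        have := hρ (k + 1)
        split_ifs <;> omega
      omega

lemma bDom (hρ : IsPartition ρ) (hσ : IsPartition σ) (m : ℕ) :
    psum (interleave ρ σ) m ≤ psum (interleave (bRho ρ σ) (bSigma ρ σ)) m := by
  rcases Nat.even_or_odd m with ⟨k, hk⟩ | ⟨k, hk⟩
  · have hm : m = 2 * k := by omega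
    subst hm
    cases k with
    | zero => simp [psum]
    | succ k' =>
      rw [psum_interleave_e, psum_interleave_e]
      have := (bSum ρ σ hρ hσ k').2
      omega
  · subst hk
    rw [psum_interleave_o, psum_interleave_o]
    have := (bSum ρ σ hρ hσ k).1
    omega

end AuxB5
/-- `(ρ;σ) ≤ Φ̂^B(Φ^B(ρ;σ))`, with equality iff `(ρ;σ)` is
B-distinguished. -/
theorem le_hphiB_phiB (n : ℕ) (ρ σ : ℕ → ℕ) (h : IsBipartition n ρ σ) :
    Dominates (hphiB (fun j => (PhiB ρ σ j).toNat)) (interleave ρ σ) ∧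
      ((∀ i, interleave ρ σ i = hphiB (fun j => (PhiB ρ σ j).toNat) i) ↔
        QB ρ σ) := by
  obtain ⟨hρ, hσ, -⟩ := h
  have hfun : (fun j => (PhiB ρ σ j).toNat) = lB ρ σ := rfl
  rw [hfun]
  have key : ∀ j, hphiB (lB ρ σ) j = interleave (bRho ρ σ) (bSigma ρ σ) j :=
    hphiB_eq ρ σ hρ hσ
  have hps : ∀ m, psum (hphiB (lB ρ σ)) m
      = psum (interleave (bRho ρ σ) (bSigma ρ σ)) m :=
    fun m => Finset.sum_congr rfl (fun i _ => key i)
  refine ⟨?_, ?_, ?_⟩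
  · intro m
    rw [hps m]
    exact bDom ρ σ hρ hσ m
  · intro heq i
    have h1 := heq (2 * i)
    rw [key (2 * i), interleave_e, interleave_e] at h1
    have h2 := heq (2 * i + 1)
    rw [key (2 * i + 1), interleave_o, interleave_o] at h2
    constructor
    · cases i with
      | zero => simp only [bRho] at h1; split_ifs at h1 <;> omega
      | succ i' => simp only [bRho] at h1; split_ifs at h1 <;> omega
    · simp only [bSigma] at h2; split_ifs at h2 <;> omega
  · intro hQB i
    rw [key i]
    rcases Nat.even_or_odd i with ⟨k, hk⟩ | ⟨k, hk⟩
    · have hi : i = 2 * k := by omega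
      subst hi
      rw [interleave_e, interleave_e]
      cases k with
      | zero =>
        have q1 := (hQB 0).1
        simp only [bRho]; split_ifs <;> omega
      | succ k' =>
        have q1 := (hQB (k' + 1)).1
        have q2 := (hQB k').2
        simp only [bRho]; split_ifs <;> omega
    · subst hk
      rw [interleave_o, interleave_o]
      have q1 := (hQB k).1
      have q2 := (hQB k).2
      simp only [bSigma]; split_ifs <;> omega
end

section
/- For any bipartition (ρ;σ) of n, there exists a unique (ρ;σ)~ ∈ Q_n^{B,2} satisfying: (1) (ρ;σ) ≤ (ρ;σ)~ and ρ + σ = μ + ν where (μ;ν) = (ρ;σ)~ (termwise sum of partitions); and (2) (ρ;σ)~ ≤ (τ;υ) for every (τ;υ) ∈ Q_n^{B,2} with (ρ;σ) ≤ (τ;υ). It is constructed by replacing ρ_i, σ_i with ⌈(ρ_i+σ_i)/2⌉ − 1, ⌊(ρ_i+σ_i)/2⌋ + 1 whenever ρ_i < σ_i − 2. -/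
open Finset

lemma my_psum_succ (f : ℕ → ℕ) (k : ℕ) : psum f (k + 1) = psum f k + f k := by
  simp [psum, Finset.sum_range_succ]

lemma my_il_even (f g : ℕ → ℕ) (m : ℕ) : interleave f g (2 * m) = f m := by
  have h1 : (2 * m) % 2 = 0 := by omega
  have h2 : (2 * m) / 2 = m := by omega
  simp [interleave, h1, h2]

lemma my_il_odd (f g : ℕ → ℕ) (m : ℕ) : interleave f g (2 * m + 1) = g m := by
  have h1 : (2 * m + 1) % 2 = 1 := by omega
  have h2 : (2 * m + 1) / 2 = m := by omega
  simp [interleave, h1, h2]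

lemma my_psum_even (f g : ℕ → ℕ) (m : ℕ) :
    psum (interleave f g) (2 * m) = ∑ i ∈ Finset.range m, (f i + g i) := by
  induction m with
  | zero => simp [psum]
  | succ m ih =>
    have h : 2 * (m + 1) = (2 * m + 1) + 1 := by ring
    rw [h, my_psum_succ, my_psum_succ, ih, my_il_even, my_il_odd,
      Finset.sum_range_succ]
    omega

lemma my_psum_odd (f g : ℕ → ℕ) (m : ℕ) :
    psum (interleave f g) (2 * m + 1) =
      (∑ i ∈ Finset.range m, (f i + g i)) + f m := by
  rw [my_psum_succ, my_psum_even, my_il_even]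

lemma my_psum_stable (f : ℕ → ℕ) (N : ℕ) (h0 : ∀ i, N ≤ i → f i = 0) :
    ∀ M, N ≤ M → psum f M = psum f N := by
  intro M
  induction M with
  | zero =>
    intro hM
    have h : N = 0 := by omega
    subst h
    rfl
  | succ M ih =>
    intro hM
    rcases Nat.lt_or_ge N (M + 1) with h | h
    · rw [my_psum_succ, ih (by omega), h0 M (by omega)]; omega
    · have h' : N = M + 1 := by omega
      rw [h']

/-- existence, explicit construction, and uniqueness of the
closure `(ρ;σ)~ ∈ Q_n^{B,2}`: it dominates `(ρ;σ)` with the same termwise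
sum, and is below every element of `Q_n^{B,2}` dominating `(ρ;σ)`. -/
theorem tilde_closure (n : ℕ) (ρ σ : ℕ → ℕ) (h : IsBipartition n ρ σ) :
    (IsBipartition n (tRho ρ σ) (tSigma ρ σ) ∧
     QB2 (tRho ρ σ) (tSigma ρ σ) ∧
     BiLE ρ σ (tRho ρ σ) (tSigma ρ σ) ∧
     (∀ i, ρ i + σ i = tRho ρ σ i + tSigma ρ σ i) ∧
     (∀ τ υ : ℕ → ℕ, IsBipartition n τ υ → QB2 τ υ → BiLE ρ σ τ υ →
        BiLE (tRho ρ σ) (tSigma ρ σ) τ υ)) ∧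
    (∀ μ ν : ℕ → ℕ, IsBipartition n μ ν → QB2 μ ν → BiLE ρ σ μ ν →
      (∀ i, ρ i + σ i = μ i + ν i) →
      (∀ τ υ : ℕ → ℕ, IsBipartition n τ υ → QB2 τ υ → BiLE ρ σ τ υ →
        BiLE μ ν τ υ) →
      (∀ i, μ i = tRho ρ σ i) ∧ (∀ i, ν i = tSigma ρ σ i)) := by
  obtain ⟨hρ, hσ, N, hN0, hNs⟩ := h
  have hsum : ∀ i, tRho ρ σ i + tSigma ρ σ i = ρ i + σ i := by
    intro i; simp only [tRho, tSigma]; split_ifs with h1 <;> omega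
  have hge : ∀ i, ρ i ≤ tRho ρ σ i := by
    intro i; simp only [tRho]; split_ifs with h1 <;> omega
  have hqb2 : QB2 (tRho ρ σ) (tSigma ρ σ) := by
    intro i; simp only [tRho, tSigma]; split_ifs with h1 <;> omega
  have hpartρ : IsPartition (tRho ρ σ) := by
    intro i
    have h1 := hρ i; have h2 := hσ i
    simp only [tRho]; split_ifs <;> omega
  have hpartσ : IsPartition (tSigma ρ σ) := by
    intro i
    have h1 := hρ i; have h2 := hσ i
    simp only [tSigma]; split_ifs <;> omega
  have hz : ∀ j, N ≤ j → ρ j = 0 ∧ σ j = 0 := by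
    intro j hj
    have h1 := hN0 (2 * j) (by omega)
    have h2 := hN0 (2 * j + 1) (by omega)
    rw [my_il_even] at h1; rw [my_il_odd] at h2
    exact ⟨h1, h2⟩
  have htz : ∀ j, N ≤ j → tRho ρ σ j = 0 ∧ tSigma ρ σ j = 0 := by
    intro j hj
    obtain ⟨e1, e2⟩ := hz j hj
    constructor
    · simp only [tRho]; split_ifs <;> omega
    · simp only [tSigma]; split_ifs <;> omega
  have hNs2 : psum (interleave ρ σ) (2 * N) = n := by
    rw [my_psum_stable (interleave ρ σ) N hN0 (2 * N) (by omega)]; exact hNs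
  have hcomp : IsComposition n (interleave (tRho ρ σ) (tSigma ρ σ)) := by
    refine ⟨2 * N, ?_, ?_⟩
    · intro i hi
      rcases Nat.even_or_odd i with ⟨m, hm⟩ | ⟨m, hm⟩
      · have h : i = 2 * m := by omega
        subst h
        rw [my_il_even]
        exact (htz m (by omega)).1
      · have h : i = 2 * m + 1 := by omega
        subst h
        rw [my_il_odd]
        exact (htz m (by omega)).2
    · rw [my_psum_even, Finset.sum_congr rfl (fun i _ => hsum i)]
      rw [my_psum_even] at hNs2
      exact hNs2
  have hdom : BiLE ρ σ (tRho ρ σ) (tSigma ρ σ) := by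
    intro k
    rcases Nat.even_or_odd k with ⟨m, hm⟩ | ⟨m, hm⟩
    · have h : k = 2 * m := by omega
      subst h
      rw [my_psum_even, my_psum_even, Finset.sum_congr rfl (fun i _ => hsum i)]
    · have h : k = 2 * m + 1 := by omega
      subst h
      rw [my_psum_odd, my_psum_odd, Finset.sum_congr rfl (fun i _ => hsum i)]
      exact Nat.add_le_add_left (hge m) _
  have hmin : ∀ τ υ : ℕ → ℕ, IsBipartition n τ υ → QB2 τ υ → BiLE ρ σ τ υ →
      BiLE (tRho ρ σ) (tSigma ρ σ) τ υ := by
    intro τ υ _ hq hle k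
    rcases Nat.even_or_odd k with ⟨m, hm⟩ | ⟨m, hm⟩
    · have h : k = 2 * m := by omega
      subst h
      have h1 := hle (2 * m)
      rw [my_psum_even, my_psum_even] at h1
      rw [my_psum_even, my_psum_even, Finset.sum_congr rfl (fun i _ => hsum i)]
      exact h1
    · have h : k = 2 * m + 1 := by omega
      subst h
      have h1 := hle (2 * m)
      rw [my_psum_even, my_psum_even] at h1
      have h2 := hle (2 * (m + 1))
      rw [my_psum_even, my_psum_even, Finset.sum_range_succ,
        Finset.sum_range_succ] at h2
      have h3 := hle (2 * m + 1)
      rw [my_psum_odd, my_psum_odd] at h3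
      have hq2 := hq m
      rw [my_psum_odd, my_psum_odd, Finset.sum_congr rfl (fun i _ => hsum i)]
      simp only [tRho]
      split_ifs with hc
      · omega
      · exact h3
  refine ⟨⟨⟨hpartρ, hpartσ, hcomp⟩, hqb2, hdom, fun i => (hsum i).symm, hmin⟩, ?_⟩
  intro μ ν hbiμ hqμ hleμ hsμ hminμ
  have d1 : BiLE μ ν (tRho ρ σ) (tSigma ρ σ) :=
    hminμ _ _ ⟨hpartρ, hpartσ, hcomp⟩ hqb2 hdom
  have d2 : BiLE (tRho ρ σ) (tSigma ρ σ) μ ν := hmin μ ν hbiμ hqμ hleμ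
  have heq : ∀ k, psum (interleave μ ν) k =
      psum (interleave (tRho ρ σ) (tSigma ρ σ)) k :=
    fun k => le_antisymm (d1 k) (d2 k)
  have hptw : ∀ j, interleave μ ν j = interleave (tRho ρ σ) (tSigma ρ σ) j := by
    intro j
    have e1 := heq j
    have e2 := heq (j + 1)
    rw [my_psum_succ, my_psum_succ] at e2
    omega
  constructor
  · intro i
    have h := hptw (2 * i)
    rwa [my_il_even, my_il_even] at h
  · intro i
    have h := hptw (2 * i + 1)
    rwa [my_il_odd, my_il_odd] at h
end

section
/- Let (ρ;σ) and (μ;ν) be bipartitions of n with ρ + σ = μ + ν (termwise). Then (ρ;σ) ≤ (μ;ν) in the interleaved dominance order if and only if ρ_i ≤ μ_i for all i. -/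
open Finset

lemma psum_succ_s16 (π : ℕ → ℕ) (k : ℕ) : psum π (k + 1) = psum π k + π k := by
  simp [psum, Finset.sum_range_succ]

lemma interleave_even (ρ σ : ℕ → ℕ) (k : ℕ) : interleave ρ σ (2 * k) = ρ k := by
  simp [interleave, Nat.mul_mod_right, Nat.mul_div_cancel_left]

lemma interleave_odd (ρ σ : ℕ → ℕ) (k : ℕ) : interleave ρ σ (2 * k + 1) = σ k := by
  have h1 : (2 * k + 1) % 2 = 1 := by omega
  have h2 : (2 * k + 1) / 2 = k := by omega
  simp [interleave, h1, h2]

lemma psum_interleave_even (ρ σ : ℕ → ℕ) (k : ℕ) :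
    psum (interleave ρ σ) (2 * k) = psum ρ k + psum σ k := by
  induction k with
  | zero => simp [psum]
  | succ k ih =>
      have : 2 * (k + 1) = (2 * k + 1) + 1 := by ring
      rw [this, psum_succ_s16, psum_succ_s16, interleave_even, interleave_odd,
        psum_succ_s16, psum_succ_s16, ih]
      ring

lemma psum_interleave_odd (ρ σ : ℕ → ℕ) (k : ℕ) :
    psum (interleave ρ σ) (2 * k + 1) = psum ρ k + psum σ k + ρ k := by
  rw [psum_succ_s16, psum_interleave_even, interleave_even]

/-- if `ρ + σ = μ + ν` termwise, then `(ρ;σ) ≤ (μ;ν)` in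
interleaved dominance order iff `ρ i ≤ μ i` for all `i`. -/
theorem biLE_iff_of_sum_eq (n : ℕ) (ρ σ μ ν : ℕ → ℕ)
    (h1 : IsBipartition n ρ σ) (h2 : IsBipartition n μ ν)
    (hsum : ∀ i, ρ i + σ i = μ i + ν i) :
    BiLE ρ σ μ ν ↔ ∀ i, ρ i ≤ μ i := by
  have hS : ∀ k, psum ρ k + psum σ k = psum μ k + psum ν k := by
    intro k
    simp only [psum, ← Finset.sum_add_distrib]
    exact Finset.sum_congr rfl fun i _ => hsum i
  constructor
  · intro hle i
    have := hle (2 * i + 1)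
    rw [psum_interleave_odd, psum_interleave_odd] at this
    have := hS i
    omega
  · intro h k
    rcases Nat.even_or_odd k with ⟨m, hm⟩ | ⟨m, hm⟩
    · subst hm
      rw [show m + m = 2 * m by ring, psum_interleave_even, psum_interleave_even, hS]
    · subst hm
      rw [psum_interleave_odd, psum_interleave_odd]
      have := hS m
      have := h m
      omega
end

section
/- For any bipartition (ρ;σ) of n, one has ((ρ;σ)~)^B = (ρ;σ)^B, where (ρ;σ)~ = Φ̂-type closure into Q_n^{B,2} (replace ρ_i, σ_i with ⌈(ρ_i+σ_i)/2⌉−1, ⌊(ρ_i+σ_i)/2⌋+1 whenever ρ_i < σ_i − 2) and (·)^B = Φ̂^B ∘ Φ^B is the closure into Q_n^B. -/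
open Finset

/-- `((ρ;σ)~)^B = (ρ;σ)^B`. -/
theorem bClosure_tilde (n : ℕ) (ρ σ : ℕ → ℕ) (h : IsBipartition n ρ σ) :
    (∀ i, bRho (tRho ρ σ) (tSigma ρ σ) i = bRho ρ σ i) ∧
    (∀ i, bSigma (tRho ρ σ) (tSigma ρ σ) i = bSigma ρ σ i) := by
  obtain ⟨hρ, hσ, -⟩ := h
  constructor
  · intro i
    cases i with
    | zero =>
      simp only [bRho, tRho, tSigma]
      split_ifs <;> omega
    | succ i =>
      have h1 := hρ i
      have h2 := hσ i
      simp only [bRho, tRho, tSigma]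
      split_ifs <;> omega
  · intro i
    have h1 := hρ i
    have h2 := hσ i
    simp only [bSigma, tRho, tSigma]
    split_ifs <;> omega
end

section
/- Let 𝔽 be a field of characteristic 2, V a 2n-dimensional 𝔽-vector space with a nondegenerate alternating bilinear form ⟨·,·⟩, and for v ∈ V define s(v) ∈ End(V) by s(v)(w) = ⟨v,w⟩ v. Then for any v ∈ V and any x ∈ End(V) satisfying ⟨xw,w⟩ = 0 for all w ∈ V, the endomorphism s(v) + x is nilpotent if and only if x is nilpotent. -/
/-- An endomorphism of a module is nilpotent iff its restriction to an invariant
submodule and the induced map on the quotient are both nilpotent. -/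
lemma isNilpotent_iff_restrict_mapQ {R M : Type*} [CommRing R] [AddCommGroup M]
    [Module R M] (f : Module.End R M) (p : Submodule R M)
    (h : ∀ m ∈ p, f m ∈ p) :
    IsNilpotent f ↔
      IsNilpotent (f.restrict h) ∧
        IsNilpotent (p.mapQ p f (fun m hm => h m hm)) := by
  constructor
  · intro hf
    exact ⟨Module.End.isNilpotent.restrict h hf, Module.End.IsNilpotent.mapQ _ hf⟩
  · rintro ⟨⟨b, hb⟩, ⟨a, ha⟩⟩
    refine ⟨b + a, ?_⟩
    ext w
    have h1 : (f ^ a) w ∈ p := by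
      have := LinearMap.congr_fun ha (Submodule.Quotient.mk w)
      rw [← Submodule.mapQ_pow] at this
      simpa [Submodule.mapQ_apply, Submodule.Quotient.mk_eq_zero] using this
    have h2 := LinearMap.congr_fun hb ⟨(f ^ a) w, h1⟩
    rw [Module.End.pow_restrict] at h2
    have h3 : (f ^ b) ((f ^ a) w) = 0 := by
      simpa [LinearMap.restrict_apply, Subtype.ext_iff] using h2
    simp [pow_add, Module.End.mul_apply, h3, Module.End.mul_apply]

/-- Kato: let `𝔽` be a field of characteristic 2, `V` a
`2n`-dimensional `𝔽`-vector space with a nondegenerate alternating bilinear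
form `B`, and for `v ∈ V` let `s v : End V` be `w ↦ B v w • v`.  Then for
`v ∈ V` and `x ∈ End V` with `B (x w) w = 0` for all `w`, the endomorphism
`s v + x` is nilpotent iff `x` is nilpotent. -/
theorem nilpotent_add_sv_iff (𝔽 : Type*) [Field 𝔽] [CharP 𝔽 2]
    (V : Type*) [AddCommGroup V] [Module 𝔽 V] [FiniteDimensional 𝔽 V]
    (n : ℕ) (hdim : Module.finrank 𝔽 V = 2 * n)
    (B : LinearMap.BilinForm 𝔽 V) (hB : B.Nondegenerate)
    (halt : ∀ v : V, B v v = 0)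
    (v : V) (x : Module.End 𝔽 V) (hx : ∀ w : V, B (x w) w = 0) :
    IsNilpotent ((LinearMap.toSpanSingleton 𝔽 V v).comp (B v) + x) ↔
      IsNilpotent x := by
  set d : Module.End 𝔽 V := (LinearMap.toSpanSingleton 𝔽 V v).comp (B v) with hd
  have hdapp : ∀ w : V, d w = B v w • v := fun w => rfl
  -- symmetry of B in characteristic 2
  have hsym : ∀ a b : V, B a b = B b a := by
    intro a b
    have h := halt (a + b)
    simp only [map_add, LinearMap.add_apply, halt] at h
    have h' : B a b + B b a = 0 := by linear_combination h
    have h2 := eq_neg_of_add_eq_zero_left h'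
    rwa [CharTwo.neg_eq] at h2
  -- x is self-adjoint
  have hadj : ∀ a b : V, B (x a) b = B a (x b) := by
    intro a b
    have h := hx (a + b)
    simp only [map_add, LinearMap.add_apply, hx] at h
    have h' : B (x a) b + B (x b) a = 0 := by linear_combination h
    have h2 := eq_neg_of_add_eq_zero_left h'
    rw [CharTwo.neg_eq] at h2
    rw [h2, hsym]
  -- move powers of x across B
  have hmove : ∀ a b : ℕ, B ((x ^ a) v) ((x ^ b) v) = B v ((x ^ (a + b)) v) := by
    intro a
    induction a with
    | zero => intro b; simp
    | succ k ih =>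
        intro b
        have e1 : (x ^ (k + 1)) v = x ((x ^ k) v) := by
          rw [pow_succ', Module.End.mul_apply]
        have e2 : x ((x ^ b) v) = (x ^ (b + 1)) v := by
          rw [pow_succ', Module.End.mul_apply]
        rw [e1, hadj, e2, ih (b + 1)]
        ring_nf
  -- B v (x^i v) = 0 for all i
  have hBv : ∀ i : ℕ, B v ((x ^ i) v) = 0 := by
    intro i
    rcases Nat.even_or_odd i with ⟨k, hk⟩ | ⟨k, hk⟩
    · subst hk
      rw [← hmove k k]
      exact halt _
    · subst hk
      have : k + 1 + k = 2 * k + 1 := by ring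
      rw [← this, ← hmove (k + 1) k]
      have e1 : (x ^ (k + 1)) v = x ((x ^ k) v) := by
        rw [pow_succ', Module.End.mul_apply]
      rw [e1, hx]
  -- the invariant submodule
  set p : Submodule 𝔽 V := Submodule.span 𝔽 (Set.range fun i : ℕ => (x ^ i) v)
    with hp
  have hvp : v ∈ p := Submodule.subset_span ⟨0, by simp⟩
  have hxp : ∀ m ∈ p, x m ∈ p := by
    intro m hm
    induction hm using Submodule.span_induction with
    | mem w hw =>
        obtain ⟨i, rfl⟩ := hw
        refine Submodule.subset_span ⟨i + 1, ?_⟩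
        show (x ^ (i + 1)) v = x ((x ^ i) v)
        rw [pow_succ', Module.End.mul_apply]
    | zero => simp
    | add a b _ _ ha hb => rw [map_add]; exact add_mem ha hb
    | smul c a _ ha => rw [map_smul]; exact Submodule.smul_mem _ _ ha
  have hdp0 : ∀ m ∈ p, d m = 0 := by
    intro m hm
    induction hm using Submodule.span_induction with
    | mem w hw =>
        obtain ⟨i, rfl⟩ := hw
        rw [hdapp, hBv i, zero_smul]
    | zero => simp
    | add a b _ _ ha hb => rw [map_add, ha, hb, add_zero]
    | smul c a _ ha => rw [map_smul, ha, smul_zero]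
  have hdran : ∀ w : V, d w ∈ p := fun w => by
    rw [hdapp]; exact Submodule.smul_mem _ _ hvp
  have hyp : ∀ m ∈ p, (d + x) m ∈ p := by
    intro m hm
    rw [LinearMap.add_apply]
    exact add_mem (hdran m) (hxp m hm)
  -- restrictions agree
  have hres : (d + x).restrict hyp = x.restrict hxp := by
    ext ⟨m, hm⟩
    simp [LinearMap.restrict_apply, LinearMap.add_apply, hdp0 m hm]
  -- quotient maps agree
  have hquo : p.mapQ p (d + x) (fun m hm => hyp m hm)
      = p.mapQ p x (fun m hm => hxp m hm) := by
    apply Submodule.linearMap_qext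
    ext w
    simp only [LinearMap.comp_apply, Submodule.mkQ_apply, Submodule.mapQ_apply,
      LinearMap.add_apply]
    rw [Submodule.Quotient.eq]
    simpa using hdran w
  rw [isNilpotent_iff_restrict_mapQ (d + x) p hyp,
    isNilpotent_iff_restrict_mapQ x p hxp, hres, hquo]
end
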